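/- arXiv:2401.10092 — 2 statements merged into one kernel-verified Lean document; each statement's English description precedes it below -/
import Mathlib

section
/- Let Z and ν be orthogonal pure octonions. Then for every octonion Y, conj(Y·Z·ν) = Z·conj(Y·ν), where the products Y·Z·ν are associated as ((Y·Z)·ν) and the right side is Z·conj(Y·ν). -/
/-- The octonions, built by the Cayley–Dickson construction on the quaternions. -/
def Oct : Type := Quaternion ℝ × Quaternion ℝ

noncomputable instance : AddCommGroup Oct := inferInstanceAs (AddCommGroup (Quaternion ℝ × Quaternion ℝ))
noncomputable instance : Module ℝ Oct := inferInstanceAs (Module ℝ (Quaternion ℝ × Quaternion ℝ))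

namespace Oct

/-- Cayley–Dickson multiplication. -/
noncomputable def mul (x y : Oct) : Oct :=
  (x.1 * y.1 - star y.2 * x.2, y.2 * x.1 + x.2 * star y.1)

/-- Octonion conjugation. -/
noncomputable def conj (x : Oct) : Oct := (star x.1, -x.2)

/-- Real part. -/
def re (x : Oct) : ℝ := x.1.re

/-- The standard inner product `⟨x, y⟩ = Re (x ⬝ conj y)`. -/
noncomputable def inner (x y : Oct) : ℝ := re (mul x (conj y))

/-- Squared norm. -/
noncomputable def normSq (x : Oct) : ℝ := inner x x

/-- A pure (purely imaginary) octonion is one with zero real part. -/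
def IsPure (x : Oct) : Prop := re x = 0

end Oct

/-- For orthogonal pure octonions ,  and any octonion ,
. -/
theorem conj_mul_mul (Z ν : Oct) (hZ : Oct.IsPure Z) (hν : Oct.IsPure ν)
    (h : Oct.inner Z ν = 0) (Y : Oct) :
    Oct.conj (Oct.mul (Oct.mul Y Z) ν) = Oct.mul Z (Oct.conj (Oct.mul Y ν)) := by
  obtain ⟨a, b⟩ := Z
  obtain ⟨c, d⟩ := ν
  obtain ⟨p, q⟩ := Y
  simp only [Oct.IsPure, Oct.re] at hZ hν
  simp only [Oct.inner, Oct.re, Oct.mul, Oct.conj, Prod.mk.injEq] at h ⊢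
  simp only [Quaternion.re_sub, Quaternion.re_add, Quaternion.re_mul, Quaternion.re_star,
    Quaternion.imI_star, Quaternion.imJ_star, Quaternion.imK_star, Quaternion.re_neg,
    Quaternion.imI_neg, Quaternion.imJ_neg, Quaternion.imK_neg, hZ, hν] at h
  refine Prod.ext ?_ ?_ <;> ext <;>
    simp only [Quaternion.ext_iff, Quaternion.re_sub, Quaternion.re_add, Quaternion.re_mul,
      Quaternion.re_star, Quaternion.imI_star, Quaternion.imJ_star, Quaternion.imK_star,
      Quaternion.re_neg, Quaternion.imI_neg, Quaternion.imJ_neg, Quaternion.imK_neg,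
      Quaternion.imI_sub, Quaternion.imI_add, Quaternion.imI_mul,
      Quaternion.imJ_sub, Quaternion.imJ_add, Quaternion.imJ_mul,
      Quaternion.imK_sub, Quaternion.imK_add, Quaternion.imK_mul, hZ, hν]
  all_goals first
    | linear_combination (-2*p.re) * h
    | linear_combination (2*p.imI) * h
    | linear_combination (2*p.imJ) * h
    | linear_combination (2*p.imK) * h
    | linear_combination (2*q.re) * h
    | linear_combination (2*q.imI) * h
    | linear_combination (2*q.imJ) * h
    | linear_combination (2*q.imK) * h
end

section
/- Fix a pure unit octonion Z and a pure unit octonion ν orthogonal to Z. Define σ : 𝕆^{p+q} → 𝕆^{p+q} by σ(X_1,…,X_p,X_{p+1},…,X_{p+q}) = (X_1,…,X_p, conj(X_{p+1}·ν),…, conj(X_{p+q}·ν)). Then σ ∘ j^{(p,q)}_Z = j^{(p+q,0)}_Z ∘ σ, where j^{(p,q)}_Z(X_1,…,X_{p+q}) = (Z·X_1,…,Z·X_p, X_{p+1}·Z,…,X_{p+q}·Z) and j^{(p+q,0)}_Z(X_1,…,X_{p+q}) = (Z·X_1,…,Z·X_{p+q}). -/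
private lemma key_identity (Z ν Y : Oct) (hZ : Oct.IsPure Z) (hν : Oct.IsPure ν)
    (horth : Oct.inner Z ν = 0) :
    Oct.conj (Oct.mul (Oct.mul Y Z) ν) = Oct.mul Z (Oct.conj (Oct.mul Y ν)) := by
  obtain ⟨z1, z2⟩ := Z
  obtain ⟨n1, n2⟩ := ν
  obtain ⟨y1, y2⟩ := Y
  simp only [Oct.IsPure, Oct.re, Oct.inner, Oct.mul, Oct.conj] at *
  refine Prod.ext ?_ ?_ <;>
  simp only [Quaternion.ext_iff, Quaternion.re_mul, Quaternion.imI_mul,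
    Quaternion.imJ_mul, Quaternion.imK_mul, Quaternion.re_sub, Quaternion.imI_sub,
    Quaternion.imJ_sub, Quaternion.imK_sub, Quaternion.re_add, Quaternion.imI_add,
    Quaternion.imJ_add, Quaternion.imK_add, Quaternion.re_neg, Quaternion.imI_neg,
    Quaternion.imJ_neg, Quaternion.imK_neg, Quaternion.re_star, Quaternion.imI_star,
    Quaternion.imJ_star, Quaternion.imK_star] at horth ⊢ <;>
  refine ⟨?_, ?_, ?_, ?_⟩
  all_goals
    obtain ⟨z1r, z1i, z1j, z1k⟩ := z1
    obtain ⟨z2r, z2i, z2j, z2k⟩ := z2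
    obtain ⟨n1r, n1i, n1j, n1k⟩ := n1
    obtain ⟨n2r, n2i, n2j, n2k⟩ := n2
    obtain ⟨y1r, y1i, y1j, y1k⟩ := y1
    obtain ⟨y2r, y2i, y2j, y2k⟩ := y2
    dsimp only at hZ hν horth ⊢
    subst hZ hν
  · linear_combination (-2 * y1r) * horth
  · linear_combination (2 * y1i) * horth
  · linear_combination (2 * y1j) * horth
  · linear_combination (2 * y1k) * horth
  · linear_combination (2 * y2r) * horth
  · linear_combination (2 * y2i) * horth
  · linear_combination (2 * y2j) * horth
  · linear_combination (2 * y2k) * horth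

/-- The map  intertwines  and . -/
theorem sigma_intertwines_j (p q : ℕ) (hpq : 1 ≤ p + q) (Z ν : Oct)
    (hZ : Oct.IsPure Z) (hν : Oct.IsPure ν)
    (hZ1 : Oct.normSq Z = 1) (hν1 : Oct.normSq ν = 1) (horth : Oct.inner Z ν = 0)
    (σ : (Fin (p + q) → Oct) → (Fin (p + q) → Oct))
    (hσ : ∀ (X : Fin (p + q) → Oct) (i : Fin (p + q)),
      σ X i = if (i : ℕ) < p then X i else Oct.conj (Oct.mul (X i) ν))
    (jpq jpq0 : (Fin (p + q) → Oct) → (Fin (p + q) → Oct))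
    (hjpq : ∀ (X : Fin (p + q) → Oct) (i : Fin (p + q)),
      jpq X i = if (i : ℕ) < p then Oct.mul Z (X i) else Oct.mul (X i) Z)
    (hjpq0 : ∀ (X : Fin (p + q) → Oct) (i : Fin (p + q)),
      jpq0 X i = Oct.mul Z (X i)) :
    σ ∘ jpq = jpq0 ∘ σ := by
  funext X i
  simp only [Function.comp_apply, hσ, hjpq, hjpq0]
  by_cases h : (i : ℕ) < p
  · simp [h]
  · simp only [h, if_false]
    exact key_identity Z ν (X i) hZ hν horth
end
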